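/- Let S be the set of functions ℕ → ℕ that arise as evaluations of one-variable terms built from the variable x using only the operations + and exp2 (base-2 exponentiation), and let ≺ be the eventual strict dominance relation on S. Then (S, ≺) is a well-order whose order type is exactly ε₀, the least ordinal ε satisfying ω^ε = ε. -/

import Mathlib

/-- One-variable terms in the signature {+, exp2}. -/
inductive XTerm : Type
  | x : XTerm
  | add : XTerm → XTerm → XTerm
  | exp2 : XTerm → XTerm

/-- Evaluation over ℕ: + is addition and exp2(x) = 2^x. -/
def XTerm.eval : XTerm → ℕ → ℕ
  | .x, n => n
  | .add s t, n => s.eval n + t.eval n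
  | .exp2 s, n => 2 ^ (s.eval n)

/-- The set S of functions ℕ → ℕ arising as evaluations of {+,exp2}-terms. -/
def S11 : Type := {f : ℕ → ℕ // ∃ t : XTerm, ∀ n, t.eval n = f n}

/-- Eventual strict dominance: s ≺ t iff s(x) < t(x) for all sufficiently large x. -/
def EvDom (s t : ℕ → ℕ) : Prop := ∃ x₀ : ℕ, ∀ x > x₀, s x < t x

/-- The eventual dominance relation on S. -/
def r11 (a b : S11) : Prop := EvDom a.1 b.1

/-- ε₀: the least ordinal ε with ω^ε = ε. -/
noncomputable def eps0 : Ordinal := sInf {o : Ordinal | Ordinal.omega0 ^ o = o}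


open Ordinal

def osize : ONote → ℕ
  | .zero => 1
  | .oadd e _ a => osize e + osize a + 1

def omerge : ONote → ONote → ONote
  | .zero, b => b
  | .oadd e₁ n₁ a₁, .zero => .oadd e₁ n₁ a₁
  | .oadd e₁ n₁ a₁, .oadd e₂ n₂ a₂ =>
    match ONote.cmp e₁ e₂ with
    | .lt => .oadd e₂ n₂ (omerge (.oadd e₁ n₁ a₁) a₂)
    | .eq => .oadd e₁ (n₁ + n₂) (omerge a₁ a₂)
    | .gt => .oadd e₁ n₁ (omerge a₁ (.oadd e₂ n₂ a₂))
  termination_by a b => osize a + osize b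
  decreasing_by all_goals (simp [osize] <;> omega)

def evalO : ONote → ℕ → ℕ
  | .zero, _ => 0
  | .oadd .zero n a, x => n * x + evalO a x
  | .oadd (.oadd e1 n1 a1) n a, x => n * 2 ^ (evalO (.oadd e1 n1 a1) x) + evalO a x

/-- value of the atom `ω^e` -/
def atomv (e : ONote) (x : ℕ) : ℕ :=
  match e with
  | .zero => x
  | .oadd _ _ _ => 2 ^ evalO e x

lemma evalO_oadd (e : ONote) (n : ℕ+) (a : ONote) (x : ℕ) :
    evalO (.oadd e n a) x = n * atomv e x + evalO a x := by
  cases e <;> rfl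

lemma evalO_nadd (a b : ONote) (x : ℕ) : evalO (omerge a b) x = evalO a x + evalO b x := by
  induction a, b using omerge.induct with
  | case1 b => rw [omerge]; simp [evalO]
  | case2 e n a => rw [omerge]; simp [evalO]
  | case3 e₁ n₁ a₁ e₂ n₂ a₂ h ih =>
    rw [omerge]; rw [h]
    simp only [evalO_oadd, ih]; ring
  | case4 e₁ n₁ a₁ e₂ n₂ a₂ h ih =>
    obtain rfl := ONote.eq_of_cmp_eq h
    rw [omerge]; rw [h]
    simp only [evalO_oadd, ih, PNat.add_coe]; ring
  | case5 e₁ n₁ a₁ e₂ n₂ a₂ h ih =>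
    rw [omerge]; rw [h]
    simp only [evalO_oadd, ih]; ring

open ONote in
lemma omerge_nfBelow : ∀ {A B : ONote} {b : Ordinal}, NFBelow A b → NFBelow B b →
    NFBelow (omerge A B) b := by
  intro A B
  induction A, B using omerge.induct with
  | case1 b => intro _ _ hB; rw [omerge]; exact hB
  | case2 e n a => intro _ hA _; rw [omerge]; exact hA
  | case3 e₁ n₁ a₁ e₂ n₂ a₂ h ih =>
    intro b hA hB
    rw [omerge, h]
    haveI h1 : NF e₁ := hA.fst
    haveI h2 : NF e₂ := hB.fst
    have hlt : ONote.repr e₁ < ONote.repr e₂ := by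
      have := ONote.cmp_compares e₁ e₂; rw [h] at this; exact this
    exact NFBelow.oadd h2 (ih (NFBelow.oadd h1 hA.snd hlt) hB.snd) hB.lt
  | case4 e₁ n₁ a₁ e₂ n₂ a₂ h ih =>
    obtain rfl := ONote.eq_of_cmp_eq h
    intro b hA hB
    rw [omerge, h]
    exact NFBelow.oadd hA.fst (ih hA.snd hB.snd) hA.lt
  | case5 e₁ n₁ a₁ e₂ n₂ a₂ h ih =>
    intro b hA hB
    rw [omerge, h]
    haveI h1 : NF e₁ := hA.fst
    haveI h2 : NF e₂ := hB.fst
    have hlt : ONote.repr e₂ < ONote.repr e₁ := by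
      have := ONote.cmp_compares e₁ e₂; rw [h] at this; exact this
    exact NFBelow.oadd h1 (ih hA.snd (NFBelow.oadd h2 hB.snd hlt)) hA.lt

lemma omerge_nf {A B : ONote} (hA : ONote.NF A) (hB : ONote.NF B) : ONote.NF (omerge A B) := by
  obtain ⟨b₁, h₁⟩ := hA
  obtain ⟨b₂, h₂⟩ := hB
  exact ⟨⟨max b₁ b₂, omerge_nfBelow (h₁.mono (le_max_left _ _)) (h₂.mono (le_max_right _ _))⟩⟩

lemma omerge_ne_zero {A : ONote} (B : ONote) (hA : A ≠ 0) : omerge A B ≠ 0 := by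
  cases A with
  | zero => exact absurd rfl hA
  | oadd e₁ n₁ a₁ =>
    cases B with
    | zero => rw [omerge]; exact hA
    | oadd e₂ n₂ a₂ =>
      rw [omerge]
      rcases h : ONote.cmp e₁ e₂ <;> exact fun hh => ONote.noConfusion hh

lemma ev_ge_x : ∀ (A : ONote), A ≠ 0 → ∀ x : ℕ, 1 ≤ x → x ≤ evalO A x := by
  intro A
  induction A with
  | zero => intro h; exact absurd rfl h
  | oadd e n a ihe iha =>
    intro _ x hx
    rw [evalO_oadd]
    have hv : x ≤ atomv e x := by
      cases e with
      | zero => exact le_rfl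
      | oadd e1 n1 a1 =>
        have h1 : x ≤ evalO (ONote.oadd e1 n1 a1) x :=
          ihe (fun hh => ONote.noConfusion hh) x hx
        calc x ≤ 2 ^ x := (Nat.lt_two_pow_self (n := x)).le
        _ ≤ 2 ^ evalO (ONote.oadd e1 n1 a1) x := Nat.pow_le_pow_right (by norm_num) h1
        _ = atomv (ONote.oadd e1 n1 a1) x := rfl
    calc x ≤ atomv e x := hv
    _ ≤ n * atomv e x := Nat.le_mul_of_pos_left _ n.pos
    _ ≤ _ := Nat.le_add_right _ _

lemma nat_mul_le_two_pow (c : ℕ) : ∃ x₀ : ℕ, ∀ x > x₀, c * x ≤ 2 ^ x := by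
  refine ⟨2 * c + 1, ?_⟩
  intro x hx
  have hx' : 2 * c + 2 ≤ x := hx
  clear hx
  induction x with
  | zero => omega
  | succ y ih =>
    rcases Nat.lt_or_ge y (2 * c + 2) with hy | hy
    · -- base case : x = 2c + 2
      have hxy : y = 2 * c + 1 := by omega
      subst hxy
      have hc : c ≤ 2 ^ c := (Nat.lt_two_pow_self (n := c)).le
      have h4 : c * c ≤ 2 ^ c * 2 ^ c := Nat.mul_le_mul hc hc
      have : c * (2 * c + 2) = 2 * (c * c) + 2 * c := by ring
      rw [this]
      have h2 : 2 ^ (2 * c + 2) = 4 * (2 ^ c * 2 ^ c) := by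
        rw [← pow_add]; rw [show 2*c+2 = (c+c)+2 by ring]; ring
      rw [h2]
      nlinarith
    · have h1 := ih hy
      have hc : c ≤ 2 ^ y := le_trans (by omega) (Nat.lt_two_pow_self (n := y)).le
      calc c * (y + 1) = c * y + c := by ring
      _ ≤ 2 ^ y + 2 ^ y := Nat.add_le_add h1 hc
      _ = 2 ^ (y + 1) := by ring

lemma atomv_zero (x : ℕ) : atomv 0 x = x := rfl

lemma atomv_of_ne {e : ONote} (he : e ≠ 0) (x : ℕ) : atomv e x = 2 ^ evalO e x := by
  cases e with
  | zero => exact absurd rfl he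
  | oadd _ _ _ => rfl

lemma osize_pos (A : ONote) : 0 < osize A := by
  cases A <;> simp [osize]

open ONote in
theorem grow (N : ℕ) : ∀ A B : ONote, osize A + osize B ≤ N → NF A → NF B →
    (ONote.repr A < ONote.repr B → ∃ x₀, ∀ x > x₀, evalO A x + x ≤ evalO B x) ∧
    (B ≠ 0 → NFBelow A (ONote.repr B) → ∃ x₀, ∀ x > x₀, evalO A x + x ≤ 2 ^ evalO B x) := by
  induction N using Nat.strong_induction_on with
  | _ N IH =>
  intro A B hs hA hB
  constructor
  · -- main dominance statement
    intro hlt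
    cases A with
    | zero =>
      have hBne : B ≠ 0 := by
        rintro rfl
        simp [ONote.repr] at hlt
      exact ⟨0, fun x hx => by simpa [evalO] using ev_ge_x B hBne x hx⟩
    | oadd e₁ n₁ a₁ =>
      cases B with
      | zero =>
        simp only [ONote.repr] at hlt
        exact absurd hlt (by simp)
      | oadd e₂ n₂ a₂ =>
        haveI he₁ : NF e₁ := hA.fst
        haveI he₂ : NF e₂ := hB.fst
        have hcc := ONote.cmp_compares e₁ e₂
        rcases hcmp : ONote.cmp e₁ e₂ with _ | _ | _ <;> rw [hcmp] at hcc
        · -- repr e₁ < repr e₂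
          rw [Ordering.compares_lt, ONote.lt_def] at hcc
          have he₂ne : e₂ ≠ 0 := by
            rintro rfl
            simp only [ONote.repr] at hcc
            exact absurd hcc (by simp)
          have hAB : NFBelow (ONote.oadd e₁ n₁ a₁) (ONote.repr e₂) :=
            NFBelow.oadd he₁ hA.snd' hcc
          have hsz : osize (ONote.oadd e₁ n₁ a₁) + osize e₂ < N := by
            have := osize_pos a₂
            simp only [osize] at hs ⊢
            omega
          obtain ⟨x₁, h₁⟩ := (IH _ hsz _ e₂ le_rfl hA he₂).2 he₂ne hAB
          refine ⟨x₁, fun x hx => ?_⟩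
          have h2 := h₁ x hx
          have hBval : 2 ^ evalO e₂ x ≤ evalO (ONote.oadd e₂ n₂ a₂) x := by
            rw [evalO_oadd, atomv_of_ne he₂ne]
            calc (2:ℕ) ^ evalO e₂ x ≤ (n₂:ℕ) * 2 ^ evalO e₂ x := Nat.le_mul_of_pos_left _ n₂.pos
            _ ≤ _ := Nat.le_add_right _ _
          exact le_trans h2 hBval
        · -- e₁ = e₂
          obtain rfl := ONote.eq_of_cmp_eq hcmp
          rcases lt_trichotomy (n₁ : ℕ) (n₂ : ℕ) with hn | hn | hn
          · -- n₁ < n₂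
            have key : ∃ x₀, ∀ x > x₀, evalO a₁ x + x ≤ atomv e₁ x := by
              rcases eq_or_ne e₁ 0 with he | he
              · subst he

                have ha0 : a₁ = 0 := hA.zero_of_zero rfl
                subst ha0
                exact ⟨0, fun x hx => by simp [evalO, atomv_zero]⟩
              · have hsz : osize a₁ + osize e₁ < N := by
                  have := osize_pos a₂
                  simp only [osize] at hs ⊢
                  omega
                obtain ⟨x₂, h₂⟩ := (IH _ hsz a₁ e₁ le_rfl hA.snd hA.fst).2 he hA.snd'
                exact ⟨x₂, fun x hx => by rw [atomv_of_ne he]; exact h₂ x hx⟩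
            obtain ⟨x₀, h₀⟩ := key
            refine ⟨x₀, fun x hx => ?_⟩
            rw [evalO_oadd, evalO_oadd]
            have h1 := h₀ x hx
            have hn' : (n₁ : ℕ) + 1 ≤ n₂ := hn
            have h3 : ((n₁ : ℕ) + 1) * atomv e₁ x ≤ (n₂ : ℕ) * atomv e₁ x :=
              Nat.mul_le_mul_right _ hn'
            have h4 : ((n₁ : ℕ) + 1) * atomv e₁ x = (n₁ : ℕ) * atomv e₁ x + atomv e₁ x := by ring
            linarith
          · -- n₁ = n₂
            have hnn : n₁ = n₂ := PNat.coe_injective hn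
            subst hnn
            have haa : ONote.repr a₁ < ONote.repr a₂ := by
              simp only [ONote.repr] at hlt
              exact (add_lt_add_iff_left _).1 hlt
            have hsz : osize a₁ + osize a₂ < N := by
              have := osize_pos e₁
              simp only [osize] at hs ⊢
              omega
            obtain ⟨x₀, h₀⟩ := (IH _ hsz a₁ a₂ le_rfl hA.snd hB.snd).1 haa
            refine ⟨x₀, fun x hx => ?_⟩
            rw [evalO_oadd, evalO_oadd]
            have := h₀ x hx
            linarith
          · -- n₂ < n₁ : contradiction
            have hBA : ONote.oadd e₁ n₂ a₂ < ONote.oadd e₁ n₁ a₁ := ONote.oadd_lt_oadd_2 hB hn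
            rw [ONote.lt_def] at hBA
            exact absurd hlt (lt_asymm hBA)
        · -- e₂ < e₁ : contradiction
          rw [Ordering.compares_gt] at hcc
          have hBA : ONote.oadd e₂ n₂ a₂ < ONote.oadd e₁ n₁ a₁ := ONote.oadd_lt_oadd_1 hB hcc
          rw [ONote.lt_def] at hBA
          exact absurd hlt (lt_asymm hBA)
  · -- the exponential bound
    intro hBne hAB
    cases A with
    | zero =>
      refine ⟨0, fun x hx => ?_⟩
      have h1 := ev_ge_x B hBne x hx
      have h2 : x ≤ 2 ^ x := (Nat.lt_two_pow_self (n := x)).le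
      have h3 : (2:ℕ) ^ x ≤ 2 ^ evalO B x := Nat.pow_le_pow_right (by norm_num) h1
      simp only [evalO]
      omega
    | oadd e₁ n₁ a₁ =>
      have he₁B : ONote.repr e₁ < ONote.repr B := hAB.lt
      rcases eq_or_ne e₁ 0 with he | he
      · subst he
        have ha0 : a₁ = 0 := hA.zero_of_zero rfl
        subst ha0
        obtain ⟨x₁, h₁⟩ := nat_mul_le_two_pow (n₁ + 1)
        refine ⟨x₁ + 1, fun x hx => ?_⟩
        have hx1 : 1 ≤ x := by omega
        have hBx : x ≤ evalO B x := ev_ge_x B hBne x hx1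
        have hv : evalO (ONote.oadd 0 n₁ 0) x + x = ((n₁ : ℕ) + 1) * x := by
          rw [evalO_oadd]
          simp only [atomv_zero, evalO]
          ring
        rw [hv]
        calc ((n₁ : ℕ) + 1) * x ≤ 2 ^ x := h₁ x (by omega)
        _ ≤ 2 ^ evalO B x := Nat.pow_le_pow_right (by norm_num) hBx
      · haveI hNFe₁ : NF e₁ := hA.fst
        have hNFa₁ : NF a₁ := hA.snd
        have hsz1 : osize e₁ + osize B < N := by
          have := osize_pos a₁
          simp only [osize] at hs ⊢
          omega
        obtain ⟨x₁, h₁⟩ := (IH _ hsz1 e₁ B le_rfl hNFe₁ hB).1 he₁B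
        have hsz2 : osize a₁ + osize e₁ < N := by
          have := osize_pos B
          simp only [osize] at hs ⊢
          omega
        obtain ⟨x₂, h₂⟩ := (IH _ hsz2 a₁ e₁ le_rfl hNFa₁ hNFe₁).2 he hAB.snd
        refine ⟨max (max x₁ x₂) (n₁ + 1), fun x hx => ?_⟩
        have hb1 : evalO e₁ x + x ≤ evalO B x := h₁ x (by
          have := le_max_left x₁ x₂; have := le_max_left (max x₁ x₂) ((n₁:ℕ) + 1); omega)
        have hb2 : evalO a₁ x + x ≤ 2 ^ evalO e₁ x := h₂ x (by
          have := le_max_right x₁ x₂; have := le_max_left (max x₁ x₂) ((n₁:ℕ) + 1); omega)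
        have hb3 : (n₁ : ℕ) + 1 ≤ 2 ^ x := by
          have hxn : (n₁ : ℕ) + 1 ≤ x := by
            have := le_max_right (max x₁ x₂) ((n₁:ℕ) + 1); omega
          exact le_trans hxn (Nat.lt_two_pow_self (n := x)).le
        rw [evalO_oadd, atomv_of_ne he]
        calc (n₁ : ℕ) * 2 ^ evalO e₁ x + evalO a₁ x + x
            ≤ (n₁ : ℕ) * 2 ^ evalO e₁ x + 2 ^ evalO e₁ x := by omega
        _ = ((n₁ : ℕ) + 1) * 2 ^ evalO e₁ x := by ring
        _ ≤ 2 ^ x * 2 ^ evalO e₁ x := Nat.mul_le_mul_right _ hb3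
        _ = 2 ^ (x + evalO e₁ x) := (pow_add 2 x _).symm
        _ ≤ 2 ^ evalO B x := Nat.pow_le_pow_right (by norm_num) (by omega)

def toO : XTerm → ONote
  | .x => ONote.oadd 0 1 0
  | .add s t => omerge (toO s) (toO t)
  | .exp2 s => ONote.oadd (toO s) 1 0

lemma toO_ne_zero (t : XTerm) : toO t ≠ 0 := by
  induction t with
  | x => exact fun h => ONote.noConfusion h
  | add s t ihs iht => exact omerge_ne_zero _ ihs
  | exp2 s ihs => exact fun h => ONote.noConfusion h

lemma nf_toO (t : XTerm) : ONote.NF (toO t) := by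
  induction t with
  | x => exact ONote.NF.oadd_zero _ _
  | add s t ihs iht => exact omerge_nf ihs iht
  | exp2 s ihs => exact @ONote.NF.oadd_zero _ _ ihs

lemma evalO_toO (t : XTerm) (x : ℕ) : evalO (toO t) x = t.eval x := by
  induction t with
  | x => simp [toO, evalO_oadd, atomv_zero, evalO, XTerm.eval]
  | add s t ihs iht => simp [toO, evalO_nadd, ihs, iht, XTerm.eval]
  | exp2 s ihs =>
    have h : toO s ≠ 0 := toO_ne_zero s
    rw [XTerm.eval]
    show evalO (ONote.oadd (toO s) 1 0) x = _
    rw [evalO_oadd, atomv_of_ne h, ihs]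
    simp [evalO]

lemma cmp_self_eq {e : ONote} (he : ONote.NF e) : ONote.cmp e e = Ordering.eq := by
  haveI := he
  have hcc := ONote.cmp_compares e e
  rcases h : ONote.cmp e e with _ | _ | _ <;> rw [h] at hcc
  · rw [Ordering.compares_lt] at hcc; exact absurd hcc (lt_irrefl _)
  · rw [Ordering.compares_gt] at hcc; exact absurd hcc (lt_irrefl _)

lemma cmp_gt_of {e f : ONote} (he : ONote.NF e) (hf : ONote.NF f)
    (h : ONote.repr f < ONote.repr e) : ONote.cmp e f = Ordering.gt := by
  haveI := he; haveI := hf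
  have hcc := ONote.cmp_compares e f
  rcases hc : ONote.cmp e f with _ | _ | _ <;> rw [hc] at hcc
  · exfalso
    rw [Ordering.compares_lt, ONote.lt_def] at hcc
    exact absurd h (lt_asymm hcc)
  · exfalso
    rw [Ordering.compares_eq] at hcc
    subst hcc
    exact absurd h (lt_irrefl _)

lemma omerge_zero (b : ONote) : omerge 0 b = b := by cases b <;> (rw [omerge.eq_def])

/-- `k+1` copies of `u` added together -/
def repT (u : XTerm) : ℕ → XTerm
  | 0 => u
  | k + 1 => .add u (repT u k)

lemma toO_repT {u : XTerm} {E : ONote} (hE : ONote.NF E) (hu : toO u = ONote.oadd E 1 0) :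
    ∀ k : ℕ, toO (repT u k) = ONote.oadd E k.succPNat 0 := by
  intro k
  induction k with
  | zero => exact hu
  | succ k ih =>
    show toO (.add u (repT u k)) = _
    rw [toO]
    rw [hu, ih]
    rw [omerge.eq_def]
    simp only [cmp_self_eq hE]
    congr 1
    · apply PNat.coe_injective
      simp only [PNat.add_coe, Nat.succPNat_coe, PNat.one_coe]
      omega
    · exact omerge_zero 0

lemma exists_term : ∀ A : ONote, ONote.NF A → A ≠ 0 → ∃ t : XTerm, toO t = A := by
  intro A
  induction A with
  | zero => intro _ h; exact absurd rfl h
  | oadd e n a ihe iha =>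
    intro hA _
    -- base atom
    have hbase : ∃ u : XTerm, toO u = ONote.oadd e 1 0 := by
      rcases eq_or_ne e 0 with he | he
      · subst he; exact ⟨.x, rfl⟩
      · obtain ⟨te, hte⟩ := ihe hA.fst he
        exact ⟨.exp2 te, by rw [toO, hte]⟩
    obtain ⟨u, hu⟩ := hbase
    have hfront : toO (repT u n.natPred) = ONote.oadd e n 0 := by
      rw [toO_repT hA.fst hu, PNat.succPNat_natPred]
    rcases eq_or_ne a 0 with ha | ha
    · subst ha; exact ⟨repT u n.natPred, hfront⟩
    · obtain ⟨ta, hta⟩ := iha hA.snd ha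
      refine ⟨.add (repT u n.natPred) ta, ?_⟩
      rw [toO, hfront, hta]
      cases a with
      | zero => exact absurd rfl ha
      | oadd e₂ n₂ a₂ =>
        have hlt : ONote.repr e₂ < ONote.repr e := hA.snd'.lt
        rw [omerge.eq_def]
        simp only [cmp_gt_of hA.fst hA.snd.fst hlt]
        congr 1
        exact omerge_zero _

lemma eps0_fix : (Ordinal.omega0 : Ordinal) ^ (eps0 : Ordinal) = eps0 := by
  have hne : {o : Ordinal | Ordinal.omega0 ^ o = o}.Nonempty :=
    ⟨Ordinal.nfp (Ordinal.omega0 ^ ·) 0,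
      Ordinal.nfp_fp (Ordinal.isNormal_opow Ordinal.one_lt_omega0) 0⟩
  exact csInf_mem hne

lemma eps0_le_of_fix {α : Ordinal} (h : Ordinal.omega0 ^ α = α) : eps0 ≤ α :=
  csInf_le' h

lemma eps0_pos : (0 : Ordinal) < eps0 := by
  rcases eq_zero_or_pos eps0 with h | h
  · exfalso
    have := eps0_fix
    rw [h] at this
    simp at this
  · exact h

lemma omega0_le_eps0 : Ordinal.omega0 ≤ eps0 := by
  conv_rhs => rw [← eps0_fix]
  calc Ordinal.omega0 = Ordinal.omega0 ^ (1 : Ordinal) := (Ordinal.opow_one _).symm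
  _ ≤ _ := Ordinal.opow_le_opow_right Ordinal.omega0_pos (Order.one_le_iff_pos.2 eps0_pos)

lemma one_lt_eps0 : (1 : Ordinal) < eps0 := lt_of_lt_of_le Ordinal.one_lt_omega0 omega0_le_eps0

lemma opow_lt_eps0 {α : Ordinal} (h : α < eps0) : Ordinal.omega0 ^ α < eps0 := by
  conv_rhs => rw [← eps0_fix]
  exact (Ordinal.opow_lt_opow_iff_right Ordinal.one_lt_omega0).2 h

lemma add_lt_eps0 {α β : Ordinal} (ha : α < eps0) (hb : β < eps0) : α + β < eps0 := by
  have := Ordinal.principal_add_omega0_opow eps0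
  rw [eps0_fix] at this
  exact this ha hb

lemma mul_lt_eps0 {α β : Ordinal} (ha : α < eps0) (hb : β < eps0) : α * β < eps0 := by
  have := Ordinal.principal_mul_omega0_opow_opow eps0
  rw [eps0_fix, eps0_fix] at this
  exact this ha hb

lemma repr_lt_eps0 (A : ONote) : ONote.repr A < eps0 := by
  induction A with
  | zero => simpa [ONote.repr] using eps0_pos
  | oadd e n a ihe iha =>
    show Ordinal.omega0 ^ ONote.repr e * (n : ℕ) + ONote.repr a < eps0
    refine add_lt_eps0 (mul_lt_eps0 (opow_lt_eps0 ihe) ?_) iha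
    exact lt_of_lt_of_le (Ordinal.nat_lt_omega0 _) omega0_le_eps0

lemma surjO : ∀ α : Ordinal, α < eps0 → α ≠ 0 → ∃ A : ONote, ONote.NF A ∧ ONote.repr A = α := by
  intro α
  induction α using Ordinal.induction with
  | _ α IH =>
  intro hlt hne
  set β := Ordinal.log Ordinal.omega0 α with hβ
  have hβα : β < α := by
    rcases lt_or_eq_of_le (Ordinal.log_le_self Ordinal.omega0 α) with h | h
    · exact h
    · exfalso
      have h1 : Ordinal.omega0 ^ α ≤ α := by
        nth_rewrite 1 [← h]
        exact Ordinal.opow_log_le_self _ hne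
      have h2 : α ≤ Ordinal.omega0 ^ α := Ordinal.right_le_opow _ Ordinal.one_lt_omega0
      have h3 : Ordinal.omega0 ^ α = α := le_antisymm h1 h2
      exact absurd hlt (not_lt.2 (eps0_le_of_fix h3))
  have hωβ : Ordinal.omega0 ^ β ≤ α := Ordinal.opow_log_le_self _ hne
  have hωβ0 : Ordinal.omega0 ^ β ≠ 0 := (Ordinal.opow_pos β Ordinal.omega0_pos).ne'
  -- the coefficient
  have hdiv : α / Ordinal.omega0 ^ β < Ordinal.omega0 :=
    Ordinal.div_opow_log_lt α Ordinal.one_lt_omega0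
  obtain ⟨n, hn⟩ := Ordinal.lt_omega0.1 hdiv
  have hnpos : 0 < (n : ℕ) := by
    rcases Nat.eq_zero_or_pos n with h | h
    · exfalso
      have := (Ordinal.div_pos hωβ0).2 hωβ
      rw [hn, h] at this
      simp at this
    · exact h
  have hmod : α % Ordinal.omega0 ^ β < Ordinal.omega0 ^ β := Ordinal.mod_lt α hωβ0
  -- exponent notation
  have hexp : ∃ B : ONote, ONote.NF B ∧ ONote.repr B = β := by
    rcases eq_or_ne β 0 with h0 | h0
    · exact ⟨0, ONote.NF.zero, by simp [ONote.repr, h0]⟩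
    · exact IH β hβα (lt_trans hβα hlt) h0
  obtain ⟨B, hBnf, hBr⟩ := hexp
  -- tail notation
  have htail : ∃ C : ONote, ONote.NFBelow C (ONote.repr B) ∧
      ONote.repr C = α % Ordinal.omega0 ^ β := by
    rcases eq_or_ne (α % Ordinal.omega0 ^ β) 0 with h0 | h0
    · exact ⟨0, ONote.NFBelow.zero, by simp [ONote.repr, h0]⟩
    · have hlt2 : α % Ordinal.omega0 ^ β < α := lt_of_lt_of_le hmod hωβ
      obtain ⟨C, hCnf, hCr⟩ := IH _ hlt2 (lt_trans hlt2 hlt) h0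
      refine ⟨C, ?_, hCr⟩
      rw [hBr]
      exact ONote.NF.below_of_lt' (by rw [hCr]; exact hmod) hCnf
  obtain ⟨C, hCb, hCr⟩ := htail
  refine ⟨ONote.oadd B ⟨n, hnpos⟩ C, ONote.NF.oadd hBnf _ hCb, ?_⟩
  show Ordinal.omega0 ^ ONote.repr B * ((⟨n, hnpos⟩ : ℕ+) : ℕ) + ONote.repr C = α
  rw [hBr, hCr]
  have : ((⟨n, hnpos⟩ : ℕ+) : ℕ) = n := rfl
  rw [this, ← hn]
  exact Ordinal.div_add_mod α (Ordinal.omega0 ^ β)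

noncomputable def oval (t : XTerm) : Ordinal := ONote.repr (toO t)

lemma oval_pos (t : XTerm) : 0 < oval t := by
  have h := toO_ne_zero t
  rcases hA : toO t with _ | ⟨e, n, a⟩
  · exact absurd hA h
  · have := ONote.oadd_pos e n a
    rw [ONote.lt_def] at this
    simpa [oval, hA] using this

lemma oval_lt_eps0 (t : XTerm) : oval t < eps0 := repr_lt_eps0 _

lemma dom_of_lt {s t : XTerm} (h : oval s < oval t) : EvDom s.eval t.eval := by
  obtain ⟨x₀, h₀⟩ := (grow (osize (toO s) + osize (toO t)) (toO s) (toO t) le_rfl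
    (nf_toO s) (nf_toO t)).1 h
  refine ⟨x₀, fun x hx => ?_⟩
  have h1 := h₀ x hx
  rw [evalO_toO, evalO_toO] at h1
  omega

lemma evdom_asymm {f g : ℕ → ℕ} (h1 : EvDom f g) (h2 : EvDom g f) : False := by
  obtain ⟨x₁, h₁⟩ := h1
  obtain ⟨x₂, h₂⟩ := h2
  have a1 := h₁ (max x₁ x₂ + 1) (by omega)
  have a2 := h₂ (max x₁ x₂ + 1) (by omega)
  omega

lemma eval_eq_of_oval_eq {s t : XTerm} (h : oval s = oval t) : ∀ n, s.eval n = t.eval n := by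
  have heq : toO s = toO t := (@ONote.repr_inj (toO s) (toO t) (nf_toO s) (nf_toO t)).1 h
  intro n
  rw [← evalO_toO, ← evalO_toO, heq]

lemma oval_eq_of_eval_eq {s t : XTerm} (h : ∀ n, s.eval n = t.eval n) : oval s = oval t := by
  rcases lt_trichotomy (oval s) (oval t) with hl | he | hg
  · exfalso
    obtain ⟨x₀, h₀⟩ := dom_of_lt hl
    have := h₀ (x₀ + 1) (by omega)
    rw [h] at this
    exact lt_irrefl _ this
  · exact he
  · exfalso
    obtain ⟨x₀, h₀⟩ := dom_of_lt hg
    have := h₀ (x₀ + 1) (by omega)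
    rw [h] at this
    exact lt_irrefl _ this

lemma exists_xterm {α : Ordinal} (h0 : 0 < α) (he : α < eps0) : ∃ t : XTerm, oval t = α := by
  obtain ⟨A, hAnf, hAr⟩ := surjO α he h0.ne'
  have hAne : A ≠ 0 := by
    rintro rfl
    rw [show ONote.repr 0 = 0 from rfl] at hAr
    exact h0.ne hAr
  obtain ⟨t, ht⟩ := exists_term A hAnf hAne
  exact ⟨t, by rw [oval, ht, hAr]⟩

noncomputable def tm (f : S11) : XTerm := f.2.choose

lemma tm_spec (f : S11) : ∀ n, (tm f).eval n = f.1 n := f.2.choose_spec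

lemma exists_pre {o : Ordinal} (ho : o < eps0) : ∃ t : XTerm, oval t = 1 + o :=
  exists_xterm (lt_of_lt_of_le zero_lt_one (le_self_add : (1 : Ordinal) ≤ 1 + o)) (add_lt_eps0 one_lt_eps0 ho)

noncomputable def Ψ (o : {o : Ordinal // o < eps0}) : S11 :=
  ⟨((exists_pre o.2).choose).eval, (exists_pre o.2).choose, fun _ => rfl⟩

lemma Ψ_oval (o : {o : Ordinal // o < eps0}) : oval (tm (Ψ o)) = 1 + o.1 := by
  have h1 : ∀ n, (tm (Ψ o)).eval n = ((exists_pre o.2).choose).eval n := tm_spec (Ψ o)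
  rw [oval_eq_of_eval_eq h1]
  exact (exists_pre o.2).choose_spec

lemma Ψ_inj : Function.Injective Ψ := by
  intro a b hab
  have h1 : oval (tm (Ψ a)) = oval (tm (Ψ b)) := by rw [hab]
  rw [Ψ_oval, Ψ_oval] at h1
  exact Subtype.ext ((add_right_inj (1 : Ordinal)).1 h1)

lemma Ψ_surj : Function.Surjective Ψ := by
  intro g
  have hpos : 0 < oval (tm g) := oval_pos _
  have hlt : oval (tm g) < eps0 := oval_lt_eps0 _
  set α := oval (tm g) with hα
  have h1le : (1 : Ordinal) ≤ α := Order.one_le_iff_pos.2 hpos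
  have hprop : α - 1 < eps0 := lt_of_le_of_lt (Ordinal.sub_le_self α 1) hlt
  refine ⟨⟨α - 1, hprop⟩, ?_⟩
  have hadd : 1 + (α - 1) = α := Ordinal.add_sub_cancel_of_le h1le
  have h2 : oval (tm (Ψ ⟨α - 1, hprop⟩)) = α := by rw [Ψ_oval]; exact hadd
  have h3 := eval_eq_of_oval_eq h2
  apply Subtype.ext
  funext n
  calc (Ψ ⟨α - 1, hprop⟩).1 n = (tm (Ψ ⟨α - 1, hprop⟩)).eval n := (tm_spec _ n).symm
  _ = (tm g).eval n := h3 n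
  _ = g.1 n := tm_spec g n

lemma r11_iff (a b : S11) : r11 a b ↔ oval (tm a) < oval (tm b) := by
  constructor
  · intro h
    have hdom : EvDom (tm a).eval (tm b).eval := by
      obtain ⟨x₀, h₀⟩ := h
      exact ⟨x₀, fun x hx => by rw [tm_spec a, tm_spec b]; exact h₀ x hx⟩
    rcases lt_trichotomy (oval (tm a)) (oval (tm b)) with hl | he | hg
    · exact hl
    · exfalso
      have := eval_eq_of_oval_eq he
      obtain ⟨x₀, h₀⟩ := hdom
      have h1 := h₀ (x₀ + 1) (by omega)
      rw [this] at h1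
      exact lt_irrefl _ h1
    · exact absurd (dom_of_lt hg) (fun hh => evdom_asymm hdom hh)
  · intro h
    obtain ⟨x₀, h₀⟩ := dom_of_lt h
    exact ⟨x₀, fun x hx => by
      rw [← tm_spec a, ← tm_spec b]; exact h₀ x hx⟩

noncomputable def theIso : Subrel ((· < ·) : Ordinal → Ordinal → Prop) {o : Ordinal | o < eps0} ≃r r11 := by
  refine RelIso.mk (Equiv.ofBijective Ψ ⟨Ψ_inj, Ψ_surj⟩) ?_
  intro a b
  show r11 (Ψ a) (Ψ b) ↔ a.1 < b.1
  rw [r11_iff, Ψ_oval, Ψ_oval]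
  constructor
  · intro h; exact lt_of_add_lt_add_left h
  · intro h; exact (add_lt_add_iff_left 1).2 h

/-- (S, ≺) is a well-order of order type exactly ε₀. -/
theorem stmt11 : ∃ h : IsWellOrder S11 r11, @Ordinal.type S11 r11 h = eps0 := by
  haveI : IsWellOrder (Subtype {o : Ordinal | o < eps0}) (Subrel ((· < ·) : Ordinal → Ordinal → Prop) {o : Ordinal | o < eps0}) :=
    inferInstanceAs (IsWellOrder {o : Ordinal // o < eps0} (Subrel ((· < ·) : Ordinal → Ordinal → Prop) (fun o : Ordinal => o < eps0)))
  have hwo : IsWellOrder S11 r11 := theIso.symm.toRelEmbedding.isWellOrder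
  refine ⟨hwo, ?_⟩
  have h1 : Ordinal.lift.{1} (@Ordinal.type _ _ hwo) =
      Ordinal.lift.{0} (Ordinal.type (Subrel ((· < ·) : Ordinal → Ordinal → Prop) {o : Ordinal | o < eps0})) := by
    rw [Ordinal.lift_type_eq]
    exact ⟨theIso.symm⟩
  rw [show Ordinal.type (Subrel ((· < ·) : Ordinal → Ordinal → Prop) {o : Ordinal | o < eps0}) =
    Ordinal.typein ((· < ·) : Ordinal → Ordinal → Prop) eps0 from rfl, Ordinal.typein_ordinal] at h1
  rw [Ordinal.lift_id'] at h1
  exact Ordinal.lift_inj.1 h1
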